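/- arXiv:math/0611667 — 4 statements merged into one kernel-verified Lean document; each statement's English description precedes it below -/
import Mathlib

section
/- Fix a polynomial p on ℂ with leading coefficient a₀ and degree d, a point ξ ∈ ℂ, and r > 0. Then there exists a constant c > 0, depending only on p and r (one may take c = 4^d/(2 r^d)), such that for every function f holomorphic on the closed disk {z : |z - ξ| ≤ r} satisfying |p(z)f(z)| ≤ M e^{A|z|} on that disk for some A > 0 and M ≥ 0, one has |a₀ f(ξ)| ≤ c e^{A(|ξ|+r)} M. -/
open Polynomial Metric Complex

lemma norm_ms_prod (s : Multiset ℂ) : ‖s.prod‖ = (s.map (fun x => ‖x‖)).prod := by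
  induction s using Multiset.induction_on with
  | empty => simp
  | cons a s ih => simp [ih]

theorem stmt_1 (p : Polynomial ℂ) (ξ : ℂ) (r : ℝ) (hr : 0 < r) :
    ∃ c : ℝ, 0 < c ∧ ∀ (f : ℂ → ℂ) (A M : ℝ), 0 < A → 0 ≤ M →
      DifferentiableOn ℂ f (Metric.closedBall ξ r) →
      (∀ z ∈ Metric.closedBall ξ r,
        ‖p.eval z * f z‖ ≤ M * Real.exp (A * ‖z‖)) →
      ‖p.leadingCoeff * f ξ‖ ≤ c * Real.exp (A * (‖ξ‖ + r)) * M := by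
  by_cases hp : p = 0
  · refine ⟨1, one_pos, fun f A M hA hM _ _ => ?_⟩
    simp only [hp, leadingCoeff_zero, zero_mul, norm_zero]
    positivity
  set d := p.natDegree with hd
  refine ⟨(8 / r) ^ d, by positivity, ?_⟩
  intro f A M hA hM hf hbound
  set τ : ℂ → ℂ := fun ρ => if r / 2 ≤ ‖ρ - ξ‖ then ρ else ξ + r with hτ
  set R := p.roots with hR
  set q : Polynomial ℂ := C p.leadingCoeff * (R.map (fun ρ => X - C (τ ρ))).prod with hq
  have hsplits : p.Splits := IsAlgClosed.splits p
  have hpeq : p = C p.leadingCoeff * (R.map (fun ρ => X - C ρ)).prod :=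
    hsplits.eq_prod_roots
  have hcard : Multiset.card R = d := (splits_iff_card_roots.mp hsplits)
  -- evaluation formulas
  have habs_q : ∀ z : ℂ, ‖q.eval z‖
      = ‖p.leadingCoeff‖ * (R.map (fun ρ => ‖z - τ ρ‖)).prod := by
    intro z
    rw [hq, eval_mul, eval_C, norm_mul, eval_multiset_prod, Multiset.map_map,
      norm_ms_prod, Multiset.map_map]
    congr 1
    exact congrArg Multiset.prod (Multiset.map_congr rfl (fun x _ => by simp))
  have habs_p : ∀ z : ℂ, ‖p.eval z‖
      = ‖p.leadingCoeff‖ * (R.map (fun ρ => ‖z - ρ‖)).prod := by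
    intro z
    conv_lhs => rw [hpeq]
    rw [eval_mul, eval_C, norm_mul, eval_multiset_prod, Multiset.map_map,
      norm_ms_prod, Multiset.map_map]
    congr 1
    exact congrArg Multiset.prod (Multiset.map_congr rfl (fun x _ => by simp))
  -- lower bound on |ξ - τ ρ|
  have hτ_lb : ∀ ρ : ℂ, r / 2 ≤ ‖ξ - τ ρ‖ := by
    intro ρ
    by_cases h : r / 2 ≤ ‖ρ - ξ‖
    · simp only [hτ, if_pos h]
      rwa [norm_sub_rev]
    · simp only [hτ, if_neg h]
      have : ξ - (ξ + (r : ℂ)) = -(r : ℂ) := by ring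
      rw [this, norm_neg]
      simp only [Complex.norm_of_nonneg hr.le]
      linarith
  -- upper bound on the sphere
  have hτ_ub : ∀ z : ℂ, ‖z - ξ‖ = r →
      ∀ ρ : ℂ, ‖z - τ ρ‖ ≤ 4 * ‖z - ρ‖ := by
    intro z hz ρ
    by_cases h : r / 2 ≤ ‖ρ - ξ‖
    · simp only [hτ, if_pos h]
      nlinarith [norm_nonneg (z - ρ)]
    · push_neg at h
      simp only [hτ, if_neg (not_le.mpr h)]
      have h1 : ‖z - ρ‖ ≥ r / 2 := by
        have h2 : ‖z - ξ‖ ≤ ‖z - ρ‖ + ‖ρ - ξ‖ := by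
          have := norm_add_le (z - ρ) (ρ - ξ)
          simpa using this
        linarith
      have h3 : ‖z - (ξ + (r : ℂ))‖ ≤ 2 * r := by
        have h4 : ‖z - (ξ + (r : ℂ))‖ ≤ ‖z - ξ‖ + ‖-(r:ℂ)‖ := by
          have := norm_add_le (z - ξ) (-(r : ℂ))
          have heq : z - ξ + -(r:ℂ) = z - (ξ + (r:ℂ)) := by ring
          rwa [heq] at this
        rw [norm_neg] at h4
        simp only [Complex.norm_of_nonneg hr.le] at h4
        linarith
      linarith
  -- maximum modulus
  set S : ℝ := 4 ^ d * (M * Real.exp (A * (‖ξ‖ + r))) with hS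
  have hgd : DifferentiableOn ℂ (fun z => q.eval z * f z) (closedBall ξ r) :=
    (q.differentiable.differentiableOn).mul hf
  have hmax : ‖q.eval ξ * f ξ‖ ≤ S := by
    have H := Complex.norm_le_of_forall_mem_frontier_norm_le
      (f := fun z => eval z q * f z) (U := ball ξ r) (C := S) (z := ξ) isBounded_ball ?_ ?_ ?_
    · simpa using H
    · exact DifferentiableOn.diffContOnCl (by rwa [closure_ball ξ hr.ne'])
    · intro z hz
      rw [frontier_ball ξ hr.ne'] at hz
      have hzs : ‖z - ξ‖ = r := by
        simpa [Complex.dist_eq] using hz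
      have hzcb : z ∈ closedBall ξ r := by
        simp [Metric.mem_closedBall, Complex.dist_eq, hzs]
      have hprod_le : (R.map (fun ρ => ‖z - τ ρ‖)).prod
          ≤ 4 ^ d * (R.map (fun ρ => ‖z - ρ‖)).prod := by
        have h1 : (R.map (fun ρ => ‖z - τ ρ‖)).prod
            ≤ (R.map (fun ρ => 4 * ‖z - ρ‖)).prod :=
          Multiset.prod_map_le_prod_map₀ _ _ (fun i _ => norm_nonneg _)
            (fun i _ => hτ_ub z hzs i)
        refine h1.trans_eq ?_
        rw [show (fun ρ => 4 * ‖z - ρ‖) =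
          (fun ρ => (fun _ : ℂ => (4:ℝ)) ρ * (fun ρ => ‖z - ρ‖) ρ) from rfl,
          Multiset.prod_map_mul, Multiset.map_const', Multiset.prod_replicate, hcard]
      have hqp : ‖q.eval z‖ ≤ 4 ^ d * ‖p.eval z‖ := by
        rw [habs_q, habs_p]
        calc ‖p.leadingCoeff‖ * (R.map (fun ρ => ‖z - τ ρ‖)).prod
            ≤ ‖p.leadingCoeff‖
              * (4 ^ d * (R.map (fun ρ => ‖z - ρ‖)).prod) :=
              mul_le_mul_of_nonneg_left hprod_le (norm_nonneg _)
          _ = 4 ^ d * (‖p.leadingCoeff‖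
              * (R.map (fun ρ => ‖z - ρ‖)).prod) := by ring
      have hzabs : ‖z‖ ≤ ‖ξ‖ + r := by
        have := norm_add_le ξ (z - ξ)
        simp only [add_sub_cancel] at this
        rw [hzs] at this
        exact this
      have hexp : Real.exp (A * ‖z‖) ≤ Real.exp (A * (‖ξ‖ + r)) :=
        Real.exp_le_exp.mpr (mul_le_mul_of_nonneg_left hzabs hA.le)
      calc ‖q.eval z * f z‖ = ‖q.eval z‖ * ‖f z‖ := by
            rw [norm_mul]
        _ ≤ (4 ^ d * ‖p.eval z‖) * ‖f z‖ :=
            mul_le_mul_of_nonneg_right hqp (norm_nonneg _)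
        _ = 4 ^ d * ‖p.eval z * f z‖ := by rw [norm_mul]; ring
        _ ≤ 4 ^ d * (M * Real.exp (A * ‖z‖)) :=
            mul_le_mul_of_nonneg_left (hbound z hzcb) (by positivity)
        _ ≤ S := by
            rw [hS]
            exact mul_le_mul_of_nonneg_left (mul_le_mul_of_nonneg_left hexp hM) (by positivity)
    · rw [closure_ball ξ hr.ne']
      exact mem_closedBall_self hr.le
  -- lower bound on product at ξ
  have hPlb : (r / 2) ^ d ≤ (R.map (fun ρ => ‖ξ - τ ρ‖)).prod := by
    have h1 : ((R.map (fun _ : ℂ => r / 2)).prod : ℝ)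
        ≤ (R.map (fun ρ => ‖ξ - τ ρ‖)).prod :=
      Multiset.prod_map_le_prod_map₀ _ _ (fun i _ => by linarith) (fun i _ => hτ_lb i)
    rwa [Multiset.map_const', Multiset.prod_replicate, hcard] at h1
  -- combine
  have key : ‖p.leadingCoeff * f ξ‖ * (r / 2) ^ d ≤ S := by
    have h1 : ‖p.leadingCoeff * f ξ‖ * (r / 2) ^ d
        ≤ ‖q.eval ξ * f ξ‖ := by
      rw [norm_mul, norm_mul, habs_q]
      calc ‖p.leadingCoeff‖ * ‖f ξ‖ * (r / 2) ^ d
          ≤ ‖p.leadingCoeff‖ * ‖f ξ‖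
            * (R.map (fun ρ => ‖ξ - τ ρ‖)).prod :=
            mul_le_mul_of_nonneg_left hPlb (by positivity)
        _ = ‖p.leadingCoeff‖ * (R.map (fun ρ => ‖ξ - τ ρ‖)).prod
            * ‖f ξ‖ := by ring
    exact h1.trans hmax
  have h48 : ((8:ℝ) / r) ^ d * (r / 2) ^ d = 4 ^ d := by
    rw [← mul_pow]
    congr 1
    field_simp
    ring
  have h2 : (0:ℝ) < (r / 2) ^ d := by positivity
  rw [← mul_le_mul_iff_left₀ h2]
  calc ‖p.leadingCoeff * f ξ‖ * (r / 2) ^ d ≤ S := key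
    _ = (8 / r) ^ d * Real.exp (A * (‖ξ‖ + r)) * M * (r / 2) ^ d := by
        rw [hS, ← h48]; ring
end

section
/- Fix a non-zero polynomial p on ℂⁿ, a point ξ = (ξ₁,...,ξₙ) ∈ ℂⁿ, and r > 0. Then there exists a constant ĉ > 0 depending only on p and r such that for every function f holomorphic on the closed polydisk {z ∈ ℂⁿ : |zᵢ - ξᵢ| ≤ r for all i} satisfying |p(z)f(z)| ≤ M e^{A|z|} on that polydisk (for some A > 0, M ≥ 0, with |z| the Euclidean norm), one has |f(ξ)| e^{-√n·A|ξ|} ≤ ĉ e^{nrA} M. -/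
/-- The Euclidean norm on ℂⁿ. -/
noncomputable def enorm' {n : ℕ} (z : Fin n → ℂ) : ℝ :=
  Real.sqrt (∑ i, ‖z i‖ ^ 2)

open Polynomial Metric in
private lemma aux_pow_card_le_prod {δ : ℝ} (hδ : 0 ≤ δ) :
    ∀ (s : Multiset ℝ), (∀ x ∈ s, δ ≤ x) → δ ^ Multiset.card s ≤ s.prod := by
  intro s
  induction s using Multiset.induction_on with
  | empty => simp
  | cons a s ih =>
    intro h
    rw [Multiset.card_cons, Multiset.prod_cons, pow_succ, mul_comm]
    exact mul_le_mul (h a (Multiset.mem_cons_self a s)) (ih fun x hx => h x (Multiset.mem_cons_of_mem hx))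
      (pow_nonneg hδ _) ((hδ.trans (h a (Multiset.mem_cons_self a s))).trans (le_refl _))

private lemma aux_enorm'_eq_norm {n : ℕ} (z : Fin n → ℂ) :
    enorm' z = ‖(WithLp.equiv 2 (Fin n → ℂ)).symm z‖ := by
  simp [EuclideanSpace.norm_eq, enorm']

private lemma aux_exists_ne_zero {n : ℕ} (p : MvPolynomial (Fin n) ℂ) (hp : p ≠ 0)
    (ξ : Fin n → ℂ) (r : ℝ) (hr : 0 < r) :
    ∃ z : Fin n → ℂ, (∀ i, ‖z i - ξ i‖ < r) ∧ MvPolynomial.eval z p ≠ 0 := by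
  by_contra h
  push_neg at h
  apply hp
  apply MvPolynomial.funext (q := 0)
  intro x
  rw [map_zero]
  have hU : IsOpen {z : Fin n → ℂ | ∀ i, ‖z i - ξ i‖ < r} := by
    have : {z : Fin n → ℂ | ∀ i, ‖z i - ξ i‖ < r} =
        ⋂ i, (fun z : Fin n → ℂ => z i) ⁻¹' Metric.ball (ξ i) r := by
      ext z; simp [Metric.mem_ball, Complex.dist_eq]
    rw [this]
    exact isOpen_iInter_of_finite fun i => (continuous_apply i).isOpen_preimage _ Metric.isOpen_ball
  have hξU : ξ ∈ {z : Fin n → ℂ | ∀ i, ‖z i - ξ i‖ < r} := by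
    intro i; simpa using hr
  have han : AnalyticOnNhd ℂ (fun z : Fin n → ℂ => MvPolynomial.eval z p) Set.univ :=
    AnalyticOnNhd.eval_mvPolynomial p
  have hev : (fun z : Fin n → ℂ => MvPolynomial.eval z p) =ᶠ[nhds ξ] 0 := by
    filter_upwards [hU.mem_nhds hξU] with z hz
    exact h z hz
  have := han.eqOn_zero_of_preconnected_of_eventuallyEq_zero isPreconnected_univ
    (Set.mem_univ ξ) hev
  exact this (Set.mem_univ x)

private lemma aux_eval_aeval {n : ℕ} (ξ v : Fin n → ℂ) (p : MvPolynomial (Fin n) ℂ) (w : ℂ) :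
    Polynomial.eval w (MvPolynomial.aeval
      (fun i => Polynomial.C (ξ i) + Polynomial.C (v i) * Polynomial.X) p) =
    MvPolynomial.eval (fun i => ξ i + v i * w) p := by
  induction p using MvPolynomial.induction_on with
  | C a => simp
  | add p q hp hq => simp [hp, hq]
  | mul_X p i hp => simp [hp]

theorem stmt_2 {n : ℕ} (p : MvPolynomial (Fin n) ℂ) (hp : p ≠ 0)
    (ξ : Fin n → ℂ) (r : ℝ) (hr : 0 < r) :
    ∃ c : ℝ, 0 < c ∧ ∀ (f : (Fin n → ℂ) → ℂ) (A M : ℝ), 0 < A → 0 ≤ M →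
      DifferentiableOn ℂ f {z | ∀ i, ‖z i - ξ i‖ ≤ r} →
      (∀ z, (∀ i, ‖z i - ξ i‖ ≤ r) →
        ‖MvPolynomial.eval z p * f z‖ ≤ M * Real.exp (A * enorm' z)) →
      ‖f ξ‖ * Real.exp (-(Real.sqrt n * A * enorm' ξ)) ≤
        c * Real.exp (n * r * A) * M := by
  classical
  obtain ⟨z₀, hz₀r, hz₀⟩ := aux_exists_ne_zero p hp ξ r hr
  set v : Fin n → ℂ := fun i => z₀ i - ξ i with hv_def
  have hv : ∀ i, ‖v i‖ ≤ r := fun i => (hz₀r i).le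
  set Q : Polynomial ℂ :=
    MvPolynomial.aeval (fun i => Polynomial.C (ξ i) + Polynomial.C (v i) * Polynomial.X) p
    with hQ_def
  have hQw : ∀ w : ℂ, Q.eval w = MvPolynomial.eval (fun i => ξ i + v i * w) p :=
    fun w => aux_eval_aeval ξ v p w
  have hQ0 : Q ≠ 0 := by
    intro h
    apply hz₀
    have h1 := hQw 1
    rw [h, Polynomial.eval_zero] at h1
    have : (fun i => ξ i + v i * 1) = z₀ := by funext i; simp [hv_def]
    rw [this] at h1
    exact h1.symm
  set S : Finset ℝ := (Multiset.map (fun a => ‖a‖) Q.roots).toFinset with hS_def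
  obtain ⟨ρ, hρmem, hρS⟩ := (Set.Icc_infinite (by norm_num : (1/2:ℝ) < 1)).exists_notMem_finset S
  have hρpos : 0 < ρ := lt_of_lt_of_le (by norm_num) hρmem.1
  have hρ1 : ρ ≤ 1 := hρmem.2
  set T : Finset ℝ := insert (1:ℝ) (S.image fun s => |ρ - s|) with hT_def
  have hTne : T.Nonempty := ⟨1, Finset.mem_insert_self _ _⟩
  set δ : ℝ := T.min' hTne with hδ_def
  have hδpos : 0 < δ := by
    rw [hδ_def, Finset.lt_min'_iff]
    intro y hy
    rw [hT_def, Finset.mem_insert] at hy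
    rcases hy with rfl | hy
    · norm_num
    · obtain ⟨s, hs, rfl⟩ := Finset.mem_image.mp hy
      have : ρ ≠ s := fun h => hρS (h ▸ hs)
      exact abs_pos.mpr (sub_ne_zero.mpr this)
  have hδs : ∀ s ∈ S, δ ≤ |ρ - s| := fun s hs =>
    Finset.min'_le _ _ (Finset.mem_insert_of_mem (Finset.mem_image_of_mem _ hs))
  set ε : ℝ := ‖Q.leadingCoeff‖ * δ ^ Multiset.card Q.roots with hε_def
  have hlcne : Q.leadingCoeff ≠ 0 := Polynomial.leadingCoeff_ne_zero.mpr hQ0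
  have hεpos : 0 < ε :=
    mul_pos (norm_pos_iff.mpr hlcne) (pow_pos hδpos _)
  -- lower bound for |Q| on the circle of radius ρ
  have hQlow : ∀ w : ℂ, ‖w‖ = ρ → ε ≤ ‖Q.eval w‖ := by
    intro w hw
    have hsplit := (IsAlgClosed.splits Q).eq_prod_roots
    have habs : ‖Q.eval w‖ =
        ‖Q.leadingCoeff‖ * ((Q.roots.map fun a => ‖w - a‖).prod) := by
      conv_lhs => rw [hsplit]
      rw [Polynomial.eval_mul, Polynomial.eval_C, norm_mul, Polynomial.eval_multiset_prod,
        Multiset.map_map]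
      congr 1
      rw [show ∀ m : Multiset ℂ, ‖m.prod‖ = (m.map fun x => ‖x‖).prod from
        fun m => (Multiset.prod_hom m (normHom : ℂ →*₀ ℝ)).symm, Multiset.map_map]
      congr 1
      refine Multiset.map_congr rfl fun a _ => ?_
      simp
    rw [habs, hε_def]
    refine mul_le_mul_of_nonneg_left ?_ (norm_nonneg _)
    have hcard : Multiset.card (Q.roots.map fun a => ‖w - a‖) =
        Multiset.card Q.roots := Multiset.card_map _ _
    rw [← hcard]
    apply aux_pow_card_le_prod hδpos.le
    intro x hx
    obtain ⟨a, ha, rfl⟩ := Multiset.mem_map.mp hx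
    have h1 : |‖w‖ - ‖a‖| ≤ ‖w - a‖ :=
      abs_norm_sub_norm_le w a
    have h2 : δ ≤ |ρ - ‖a‖| := by
      apply hδs
      rw [hS_def, Multiset.mem_toFinset]
      exact Multiset.mem_map_of_mem _ ha
    rw [hw] at h1
    exact h2.trans h1
  refine ⟨1 / ε, by positivity, ?_⟩
  intro f A M hA hM hf hbound
  set D : Set (Fin n → ℂ) := {z | ∀ i, ‖z i - ξ i‖ ≤ r} with hD_def
  set φ : ℂ → (Fin n → ℂ) := fun w => fun i => ξ i + v i * w with hφ_def
  have hφdiff : Differentiable ℂ φ := by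
    rw [hφ_def]
    apply differentiable_pi.mpr
    intro i
    exact (differentiable_const _).add (differentiable_id.const_mul _)
  have hmaps : ∀ w : ℂ, ‖w‖ ≤ 1 → φ w ∈ D := by
    intro w hw i
    simp only [hφ_def]
    have : ‖ξ i + v i * w - ξ i‖ = ‖v i‖ * ‖w‖ := by
      rw [add_sub_cancel_left, norm_mul]
    rw [this]
    calc ‖v i‖ * ‖w‖ ≤ r * 1 :=
          mul_le_mul (hv i) hw (norm_nonneg _) hr.le
      _ = r := mul_one r
  set g : ℂ → ℂ := fun w => f (φ w) with hg_def
  have hgdiff : DifferentiableOn ℂ g (Metric.closedBall (0:ℂ) 1) := by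
    apply DifferentiableOn.comp hf (hφdiff.differentiableOn)
    intro w hw
    apply hmaps
    simpa [Complex.dist_eq] using Metric.mem_closedBall.mp hw
  -- bound on the Euclidean norm of points of the image
  have henorm : ∀ w : ℂ, ‖w‖ ≤ 1 →
      enorm' (φ w) ≤ enorm' ξ + Real.sqrt n * r := by
    intro w hw
    rw [aux_enorm'_eq_norm, aux_enorm'_eq_norm]
    set Z := (WithLp.equiv 2 (Fin n → ℂ)).symm (φ w)
    set Ξ := (WithLp.equiv 2 (Fin n → ℂ)).symm ξ
    have h1 : ‖Z‖ ≤ ‖Ξ‖ + ‖Z - Ξ‖ := by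
      calc ‖Z‖ = ‖Ξ + (Z - Ξ)‖ := by congr 1; abel
        _ ≤ ‖Ξ‖ + ‖Z - Ξ‖ := norm_add_le _ _
    refine h1.trans (add_le_add (le_refl _) ?_)
    have hZΞ : ‖Z - Ξ‖ = Real.sqrt (∑ i, ‖v i * w‖ ^ 2) := by
      rw [EuclideanSpace.norm_eq]
      congr 1
      refine Finset.sum_congr rfl fun i _ => ?_
      congr 1
      have : (Z - Ξ) i = v i * w := by
        simp [Z, Ξ, hφ_def]
      rw [this]
    rw [hZΞ]
    have hsum : (∑ i : Fin n, ‖v i * w‖ ^ 2) ≤ n * r ^ 2 := by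
      calc (∑ i : Fin n, ‖v i * w‖ ^ 2) ≤ ∑ _i : Fin n, r ^ 2 := by
            refine Finset.sum_le_sum fun i _ => ?_
            have : ‖v i * w‖ ≤ r := by
              rw [norm_mul]
              calc ‖v i‖ * ‖w‖ ≤ r * 1 :=
                    mul_le_mul (hv i) hw (norm_nonneg _) hr.le
                _ = r := mul_one r
            exact pow_le_pow_left₀ (norm_nonneg _) this 2
        _ = n * r ^ 2 := by simp [Finset.sum_const, nsmul_eq_mul]
    calc Real.sqrt (∑ i, ‖v i * w‖ ^ 2) ≤ Real.sqrt (n * r ^ 2) := Real.sqrt_le_sqrt hsum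
      _ = Real.sqrt n * r := by
          rw [Real.sqrt_mul (Nat.cast_nonneg n), Real.sqrt_sq hr.le]
  -- maximum modulus principle
  set C : ℝ := M * Real.exp (A * (enorm' ξ + Real.sqrt n * r)) / ε with hC_def
  have hg0 : ‖f ξ‖ ≤ C := by
    have hmax : ‖g 0‖ ≤ C := by
      apply Complex.norm_le_of_forall_mem_frontier_norm_le (U := Metric.ball (0:ℂ) ρ)
        Metric.isBounded_ball
      · apply DifferentiableOn.diffContOnCl
        rw [closure_ball _ hρpos.ne']
        exact hgdiff.mono (Metric.closedBall_subset_closedBall hρ1)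
      · intro w hw
        rw [frontier_ball _ hρpos.ne'] at hw
        have hwρ : ‖w‖ = ρ := by
          simpa [Complex.dist_eq] using Metric.mem_sphere.mp hw
        have hw1 : ‖w‖ ≤ 1 := hwρ ▸ hρ1
        have hzD : φ w ∈ D := hmaps w hw1
        have hb := hbound (φ w) hzD
        have hQeq : MvPolynomial.eval (φ w) p = Q.eval w := (hQw w).symm
        have h1 : ε * ‖g w‖ ≤ M * Real.exp (A * enorm' (φ w)) := by
          calc ε * ‖g w‖
              ≤ ‖Q.eval w‖ * ‖g w‖ :=
                mul_le_mul_of_nonneg_right (hQlow w hwρ) (norm_nonneg _)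
            _ = ‖MvPolynomial.eval (φ w) p * f (φ w)‖ := by
                rw [norm_mul, hQeq, hg_def]
            _ ≤ M * Real.exp (A * enorm' (φ w)) := hb
        have h2 : M * Real.exp (A * enorm' (φ w)) ≤
            M * Real.exp (A * (enorm' ξ + Real.sqrt n * r)) := by
          apply mul_le_mul_of_nonneg_left _ hM
          exact Real.exp_le_exp.mpr (mul_le_mul_of_nonneg_left (henorm w hw1) hA.le)
        rw [hC_def, le_div_iff₀ hεpos, mul_comm]
        exact h1.trans h2
      · rw [closure_ball _ hρpos.ne']
        exact Metric.mem_closedBall_self hρpos.le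
    have hφ0 : φ 0 = ξ := by funext i; simp [hφ_def]
    have hgf : g 0 = f ξ := by show f (φ 0) = f ξ; rw [hφ0]
    rw [hgf] at hmax
    exact hmax
  -- final arithmetic
  have hexp : A * (enorm' ξ + Real.sqrt n * r) + -(Real.sqrt n * A * enorm' ξ) ≤ n * r * A := by
    have he0 : 0 ≤ enorm' ξ := Real.sqrt_nonneg _
    rcases Nat.eq_zero_or_pos n with hn | hn
    · subst hn
      have : enorm' ξ = 0 := by
        rw [enorm']
        simp
      simp [this]
    · have h1 : (1:ℝ) ≤ Real.sqrt n := Real.one_le_sqrt.mpr (Nat.one_le_cast.mpr hn)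
      have h2 : Real.sqrt n ≤ n := by
        have hs := Real.sq_sqrt (Nat.cast_nonneg n : (0:ℝ) ≤ (n:ℝ))
        nlinarith [h1]
      nlinarith [mul_nonneg (mul_nonneg hA.le he0) (sub_nonneg.mpr h1),
        mul_nonneg (mul_nonneg hA.le hr.le) (sub_nonneg.mpr h2)]
  calc ‖f ξ‖ * Real.exp (-(Real.sqrt n * A * enorm' ξ))
      ≤ C * Real.exp (-(Real.sqrt n * A * enorm' ξ)) :=
        mul_le_mul_of_nonneg_right hg0 (Real.exp_pos _).le
    _ = (1 / ε) * (Real.exp (A * (enorm' ξ + Real.sqrt n * r) + -(Real.sqrt n * A * enorm' ξ)) * M) := by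
        rw [hC_def, Real.exp_add]; ring
    _ ≤ (1 / ε) * (Real.exp (n * r * A) * M) := by
        apply mul_le_mul_of_nonneg_left _ (by positivity)
        exact mul_le_mul_of_nonneg_right (Real.exp_le_exp.mpr hexp) hM
    _ = 1 / ε * Real.exp (↑n * r * A) * M := by ring
end

section
/- Let p be a non-zero polynomial on ℂⁿ and suppose f is an entire function of exponential type, g is entire, and f = p·g. Then g is of exponential type. -/
/-- A function on ℂⁿ is of exponential type. -/
def ExpType {n : ℕ} (f : (Fin n → ℂ) → ℂ) : Prop :=
  ∃ A > (0:ℝ), ∃ M ≥ (0:ℝ), ∀ z, ‖f z‖ ≤ M * Real.exp (A * enorm' z)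

lemma enorm'_eq_norm {n : ℕ} (z : Fin n → ℂ) :
    enorm' z = ‖((WithLp.equiv 2 (Fin n → ℂ)).symm z : EuclideanSpace ℂ (Fin n))‖ := by
  rw [EuclideanSpace.norm_eq]
  simp [enorm']

lemma enorm'_line_le {n : ℕ} (z v : Fin n → ℂ) (t : ℂ) :
    enorm' (z + t • v) ≤ enorm' z + ‖t‖ * enorm' v := by
  rw [enorm'_eq_norm, enorm'_eq_norm, enorm'_eq_norm, WithLp.equiv_symm_apply,
    WithLp.toLp_add, WithLp.toLp_smul]
  refine (norm_add_le _ _).trans ?_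
  rw [norm_smul]

open Polynomial

noncomputable def linePoly {n : ℕ} (z v : Fin n → ℂ) (p : MvPolynomial (Fin n) ℂ) :
    Polynomial ℂ :=
  MvPolynomial.aeval (fun i => Polynomial.C (z i) + Polynomial.C (v i) * Polynomial.X) p

lemma eval_linePoly {n : ℕ} (z v : Fin n → ℂ) (p : MvPolynomial (Fin n) ℂ) (t : ℂ) :
    (linePoly z v p).eval t = MvPolynomial.eval (z + t • v) p := by
  induction p using MvPolynomial.induction_on with
  | C a => simp [linePoly]
  | add q r hq hr => simp only [linePoly, map_add, eval_add] at *; rw [hq, hr]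
  | mul_X q i hq =>
      simp only [linePoly, map_mul, MvPolynomial.aeval_X, eval_mul, eval_add, eval_C,
        eval_mul, eval_X, MvPolynomial.eval_X] at *
      rw [hq]
      have : (z + t • v) i = z i + v i * t := by
        simp [Pi.add_apply, Pi.smul_apply, smul_eq_mul]; ring
      rw [this]

lemma natDegree_linePoly_monomial_le {n : ℕ} (z v : Fin n → ℂ) (s : Fin n →₀ ℕ) (c : ℂ) :
    (linePoly z v (MvPolynomial.monomial s c)).natDegree ≤ s.sum fun _ e => e := by
  rw [linePoly, MvPolynomial.aeval_monomial]
  refine natDegree_mul_le.trans ?_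
  have h1 : (algebraMap ℂ (Polynomial ℂ) c).natDegree = 0 := natDegree_C c
  rw [h1, zero_add]
  rw [Finsupp.prod, Finsupp.sum]
  refine (natDegree_prod_le _ _).trans ?_
  refine Finset.sum_le_sum fun i _ => ?_
  refine (natDegree_pow_le).trans ?_
  have : (Polynomial.C (z i) + Polynomial.C (v i) * Polynomial.X).natDegree ≤ 1 := by
    refine (natDegree_add_le _ _).trans ?_
    simp only [natDegree_C, max_le_iff]
    exact ⟨Nat.zero_le 1, (natDegree_C_mul_le _ _).trans (by simp)⟩
  calc s i * (Polynomial.C (z i) + Polynomial.C (v i) * Polynomial.X).natDegree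
      ≤ s i * 1 := Nat.mul_le_mul_left _ this
    _ = s i := Nat.mul_one _

lemma coeff_prod_sum {ι : Type*} (s : Finset ι) (f : ι → Polynomial ℂ) (m : ι → ℕ)
    (h : ∀ i ∈ s, (f i).natDegree ≤ m i) :
    (∏ i ∈ s, f i).coeff (∑ i ∈ s, m i) = ∏ i ∈ s, (f i).coeff (m i) := by
  induction s using Finset.cons_induction with
  | empty => simp
  | cons a s ha ih =>
      rw [Finset.prod_cons, Finset.sum_cons, coeff_mul_add_eq_of_natDegree_le
        (h a (Finset.mem_cons_self a s))
        ((natDegree_prod_le _ _).trans (Finset.sum_le_sum fun i hi => h i (Finset.mem_cons_of_mem hi))),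
        ih fun i hi => h i (Finset.mem_cons_of_mem hi), Finset.prod_cons]

lemma coeff_linear_pow (a b : ℂ) (k : ℕ) :
    ((Polynomial.C a + Polynomial.C b * Polynomial.X) ^ k).coeff k = b ^ k := by
  induction k with
  | zero => simp
  | succ k ih =>
      have hd : ((Polynomial.C a + Polynomial.C b * Polynomial.X) ^ k).natDegree ≤ k := by
        refine natDegree_pow_le.trans ?_
        have : (Polynomial.C a + Polynomial.C b * Polynomial.X).natDegree ≤ 1 := by
          refine (natDegree_add_le _ _).trans ?_
          simp only [natDegree_C, max_le_iff]
          exact ⟨Nat.zero_le 1, (natDegree_C_mul_le _ _).trans (by simp)⟩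
        calc k * (Polynomial.C a + Polynomial.C b * Polynomial.X).natDegree
            ≤ k * 1 := Nat.mul_le_mul_left _ this
          _ = k := Nat.mul_one _
      have h1 : (Polynomial.C a + Polynomial.C b * Polynomial.X).natDegree ≤ 1 := by
        refine (natDegree_add_le _ _).trans ?_
        simp only [natDegree_C, max_le_iff]
        exact ⟨Nat.zero_le 1, (natDegree_C_mul_le _ _).trans (by simp)⟩
      rw [pow_succ, coeff_mul_add_eq_of_natDegree_le hd h1, ih]
      simp [coeff_C, pow_succ]

lemma coeff_linePoly_monomial {n : ℕ} (z v : Fin n → ℂ) (s : Fin n →₀ ℕ) (c : ℂ) :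
    (linePoly z v (MvPolynomial.monomial s c)).coeff (s.sum fun _ e => e)
      = MvPolynomial.eval v (MvPolynomial.monomial s c) := by
  rw [linePoly, MvPolynomial.aeval_monomial, Finsupp.prod, Finsupp.sum]
  have halg : (algebraMap ℂ (Polynomial ℂ)) c = Polynomial.C c := rfl
  rw [halg, coeff_C_mul, coeff_prod_sum _ _ _ ?hd]
  case hd =>
    intro i _
    refine natDegree_pow_le.trans ?_
    have : (Polynomial.C (z i) + Polynomial.C (v i) * Polynomial.X).natDegree ≤ 1 := by
      refine (natDegree_add_le _ _).trans ?_
      simp only [natDegree_C, max_le_iff]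
      exact ⟨Nat.zero_le 1, (natDegree_C_mul_le _ _).trans (by simp)⟩
    calc s i * (Polynomial.C (z i) + Polynomial.C (v i) * Polynomial.X).natDegree
        ≤ s i * 1 := Nat.mul_le_mul_left _ this
      _ = s i := Nat.mul_one _
  simp only [MvPolynomial.eval_monomial, Finsupp.prod, Finsupp.sum]
  congr 1
  exact Finset.prod_congr rfl fun i _ => coeff_linear_pow _ _ _

lemma natDegree_linePoly_le {n : ℕ} (z v : Fin n → ℂ) (p : MvPolynomial (Fin n) ℂ) :
    (linePoly z v p).natDegree ≤ p.totalDegree := by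
  conv_lhs => rw [p.as_sum]
  rw [linePoly, map_sum]
  refine natDegree_sum_le_of_forall_le _ _ fun s hs => ?_
  exact (natDegree_linePoly_monomial_le z v s _).trans (MvPolynomial.le_totalDegree hs)

lemma coeff_linePoly_totalDegree {n : ℕ} (z v : Fin n → ℂ) (p : MvPolynomial (Fin n) ℂ) :
    (linePoly z v p).coeff p.totalDegree
      = MvPolynomial.eval v (MvPolynomial.homogeneousComponent p.totalDegree p) := by
  set d := p.totalDegree with hd
  conv_lhs => rw [p.as_sum]
  rw [linePoly, map_sum, finset_sum_coeff]
  rw [MvPolynomial.homogeneousComponent_apply, map_sum]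
  rw [Finset.sum_filter]
  refine Finset.sum_congr rfl fun s hs => ?_
  by_cases h : (s.degree : ℕ) = d
  · have hsum : (s.sum fun _ e => e) = d := by
      rw [← h]; rfl
    rw [if_pos h, ← hsum]
    exact coeff_linePoly_monomial z v s _
  · have hsum : (s.sum fun _ e => e) ≠ d := by
      intro hc; exact h (by rw [← hc]; rfl)
    have hlt : (s.sum fun _ e => e) < d := lt_of_le_of_ne (MvPolynomial.le_totalDegree hs) hsum
    rw [if_neg h]
    exact Polynomial.coeff_eq_zero_of_natDegree_lt
      (lt_of_le_of_lt (natDegree_linePoly_monomial_le z v s (MvPolynomial.coeff s p)) hlt)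

lemma exists_eval_homog_ne_zero {n : ℕ} (p : MvPolynomial (Fin n) ℂ) (hp : p ≠ 0) :
    ∃ v : Fin n → ℂ,
      MvPolynomial.eval v (MvPolynomial.homogeneousComponent p.totalDegree p) ≠ 0 := by
  have hq : MvPolynomial.homogeneousComponent p.totalDegree p ≠ 0 := by
    obtain ⟨s, hs, hdeg⟩ : ∃ s ∈ p.support, (s.sum fun _ e => e) = p.totalDegree := by
      have hne : p.support.Nonempty := MvPolynomial.support_nonempty.mpr hp
      obtain ⟨s, hs, hsup⟩ := Finset.exists_mem_eq_sup p.support hne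
        (fun s : Fin n →₀ ℕ => s.sum fun _ e => e)
      exact ⟨s, hs, by rw [MvPolynomial.totalDegree, hsup]⟩
    intro hzero
    have hcoeff := MvPolynomial.coeff_homogeneousComponent
      (φ := p) (n := p.totalDegree) s
    rw [hzero] at hcoeff
    simp only [MvPolynomial.coeff_zero] at hcoeff
    have hdeg' : s.degree = p.totalDegree := hdeg
    rw [if_pos hdeg'] at hcoeff
    exact MvPolynomial.mem_support_iff.mp hs hcoeff.symm
  by_contra hcon
  push_neg at hcon
  refine hq (MvPolynomial.funext fun x => ?_)
  rw [hcon x, map_zero]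

lemma exists_good_radius (R : Multiset ℂ) (d : ℕ) (hcard : Multiset.card R ≤ d) :
    ∃ r : ℝ, 1 ≤ r ∧ r ≤ 2 * d + 1 ∧ ∀ x ∈ R, (1:ℝ) ≤ |r - ‖x‖| := by
  by_contra hcon
  push_neg at hcon
  -- for each k ∈ range (d+1), the radius 2k+1 is bad
  have hbad : ∀ k ∈ Finset.range (d + 1), ∃ x ∈ R, |(2 * (k:ℝ) + 1) - ‖x‖| < 1 := by
    intro k hk
    have hk' : k ≤ d := Nat.lt_succ_iff.mp (Finset.mem_range.mp hk)
    refine hcon (2 * k + 1) (by have : (0:ℝ) ≤ (k:ℝ) := Nat.cast_nonneg k; linarith) ?_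
    have : (k:ℝ) ≤ d := Nat.cast_le.mpr hk'
    linarith
  classical
  set F : ℕ → ℂ := fun k =>
    if h : ∃ x ∈ R, |(2 * (k:ℝ) + 1) - ‖x‖| < 1 then h.choose else 0 with hF
  have hFmem : ∀ k ∈ Finset.range (d + 1), F k ∈ R.toFinset ∧
      |(2 * (k:ℝ) + 1) - ‖F k‖| < 1 := by
    intro k hk
    have h := hbad k hk
    rw [hF]
    simp only [dif_pos h]
    exact ⟨Multiset.mem_toFinset.mpr h.choose_spec.1, h.choose_spec.2⟩
  have hcardlt : R.toFinset.card < (Finset.range (d + 1)).card := by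
    rw [Finset.card_range]
    exact Nat.lt_succ_of_le ((Multiset.toFinset_card_le R).trans hcard)
  obtain ⟨k, hk, k', hk', hne, heq⟩ :=
    Finset.exists_ne_map_eq_of_card_lt_of_maps_to hcardlt fun k hk => (hFmem k hk).1
  have h1 := (hFmem k hk).2
  have h2 := (hFmem k' hk').2
  rw [heq] at h1
  have hgap : (2:ℝ) ≤ |(2 * (k:ℝ) + 1) - (2 * (k':ℝ) + 1)| := by
    have hne' : (k:ℝ) ≠ (k':ℝ) := by exact_mod_cast hne
    rcases lt_or_gt_of_ne hne with h | h
    · have : (k:ℝ) + 1 ≤ k' := by exact_mod_cast h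
      rw [abs_sub_comm, abs_of_nonneg (by linarith)]
      linarith
    · have : (k':ℝ) + 1 ≤ k := by exact_mod_cast h
      rw [abs_of_nonneg (by linarith)]
      linarith
  have htri : |(2 * (k:ℝ) + 1) - (2 * (k':ℝ) + 1)| < 2 := by
    calc |(2 * (k:ℝ) + 1) - (2 * (k':ℝ) + 1)|
        ≤ |(2 * (k:ℝ) + 1) - ‖F k'‖| +
          |‖F k'‖ - (2 * (k':ℝ) + 1)| := abs_sub_le _ _ _
      _ < 1 + 1 := by rw [abs_sub_comm (‖F k'‖)]; exact add_lt_add h1 h2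
      _ = 2 := by norm_num
  linarith

lemma exists_circle_lower_bound (P : Polynomial ℂ) (d : ℕ) (hle : P.natDegree ≤ d)
    (hc : P.coeff d ≠ 0) :
    ∃ r : ℝ, 1 ≤ r ∧ r ≤ 2 * d + 1 ∧ ∀ t : ℂ, ‖t‖ = r →
      ‖P.coeff d‖ ≤ ‖P.eval t‖ := by
  have hdeg : P.natDegree = d :=
    le_antisymm hle (le_natDegree_of_ne_zero hc)
  have hP0 : P ≠ 0 := fun h => hc (by simp [h])
  have hroots : Multiset.card P.roots ≤ d := hdeg ▸ P.card_roots'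
  obtain ⟨r, hr1, hr2, hr⟩ := exists_good_radius P.roots d hroots
  refine ⟨r, hr1, hr2, fun t ht => ?_⟩
  have hsplit : P.Splits := IsAlgClosed.splits P
  have hfac := hsplit.eq_prod_roots
  have hlead : P.leadingCoeff = P.coeff d := by rw [Polynomial.leadingCoeff, hdeg]
  have heval : P.eval t = P.coeff d * ((P.roots.map fun a => t - a)).prod := by
    conv_lhs => rw [hfac]
    rw [Polynomial.eval_mul, Polynomial.eval_C, hlead, Polynomial.eval_multiset_prod,
      Multiset.map_map]
    congr 2
    ext a
    simp
  rw [heval, norm_mul]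
  have habs : ‖((P.roots.map fun a => t - a)).prod‖
      = ((P.roots.map fun a => t - a).map (‖·‖)).prod := by
    exact (Multiset.prod_hom _ (normHom : ℂ →*₀ ℝ)).symm
  have hprod : (1:ℝ) ≤ ((P.roots.map fun a => t - a).map (‖·‖)).prod := by
    refine Multiset.one_le_prod fun x hx => ?_
    rw [Multiset.map_map] at hx
    obtain ⟨a, ha, rfl⟩ := Multiset.mem_map.mp hx
    have h1 : |(‖t‖) - ‖a‖| ≤ ‖t - a‖ := by
      exact abs_norm_sub_norm_le t a
    have h2 := hr a ha
    rw [ht] at h1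
    simpa using le_trans h2 h1
  rw [habs]
  nlinarith [norm_nonneg (P.coeff d), hprod]

theorem stmt_9 {n : ℕ} (p : MvPolynomial (Fin n) ℂ) (hp : p ≠ 0)
    (f g : (Fin n → ℂ) → ℂ) (hf : Differentiable ℂ f) (hg : Differentiable ℂ g)
    (hft : ExpType f) (hfg : ∀ z, f z = MvPolynomial.eval z p * g z) :
    ExpType g := by
  obtain ⟨A, hA, M, hM, hb⟩ := hft
  set d := p.totalDegree with hd
  obtain ⟨v, hv⟩ := exists_eval_homog_ne_zero p hp
  set c₀ := MvPolynomial.eval v (MvPolynomial.homogeneousComponent d p) with hc₀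
  have hc0pos : 0 < ‖c₀‖ := norm_pos_iff.mpr hv
  have hev : 0 ≤ enorm' v := Real.sqrt_nonneg _
  refine ⟨A, hA, M * Real.exp (A * ((2 * (d:ℝ) + 1) * enorm' v)) / ‖c₀‖,
    div_nonneg (mul_nonneg hM (Real.exp_pos _).le) (norm_nonneg _), fun z => ?_⟩
  set P := linePoly z v p with hP
  have hPle : P.natDegree ≤ d := natDegree_linePoly_le z v p
  have hPc : P.coeff d = c₀ := coeff_linePoly_totalDegree z v p
  obtain ⟨r, hr1, hr2, hlow⟩ := exists_circle_lower_bound P d hPle (by rw [hPc]; exact hv)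
  have hrpos : (0:ℝ) < r := by linarith
  set C := M * Real.exp (A * (enorm' z + r * enorm' v)) / ‖c₀‖ with hC
  have hdiff : DiffContOnCl ℂ (fun t : ℂ => g (z + t • v)) (Metric.ball (0:ℂ) r) :=
    (hg.comp ((differentiable_const z).add (differentiable_id.smul_const v))).diffContOnCl
  have hfr : ∀ t ∈ frontier (Metric.ball (0:ℂ) r), ‖g (z + t • v)‖ ≤ C := by
    intro t ht
    rw [frontier_ball (0:ℂ) hrpos.ne'] at ht
    have htabs : ‖t‖ = r := by
      simpa using (mem_sphere_zero_iff_norm.mp ht)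
    set w := z + t • v with hw
    have hpw : ‖c₀‖ ≤ ‖MvPolynomial.eval w p‖ := by
      have h := hlow t htabs
      rwa [hPc, hP, eval_linePoly] at h
    have hfw : ‖f w‖ ≤ M * Real.exp (A * (enorm' z + r * enorm' v)) := by
      refine (hb w).trans ?_
      refine mul_le_mul_of_nonneg_left (Real.exp_le_exp.mpr ?_) hM
      refine mul_le_mul_of_nonneg_left ?_ hA.le
      have h1 := enorm'_line_le z v t
      rw [htabs] at h1
      exact h1
    have hgw : ‖MvPolynomial.eval w p‖ * ‖g w‖ = ‖f w‖ := by
      rw [← norm_mul, ← hfg w]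
    rw [hC, le_div_iff₀ hc0pos]
    calc ‖g w‖ * ‖c₀‖
        ≤ ‖g w‖ * ‖MvPolynomial.eval w p‖ :=
          mul_le_mul_of_nonneg_left hpw (norm_nonneg _)
      _ = ‖f w‖ := by rw [mul_comm]; exact hgw
      _ ≤ M * Real.exp (A * (enorm' z + r * enorm' v)) := hfw
  have h0 : (0:ℂ) ∈ closure (Metric.ball (0:ℂ) r) :=
    subset_closure (Metric.mem_ball_self hrpos)
  have hmax : ‖(fun t : ℂ => g (z + t • v)) (0:ℂ)‖ ≤ C :=
    Complex.norm_le_of_forall_mem_frontier_norm_le Metric.isBounded_ball hdiff hfr h0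
  have hgz : ‖g z‖ ≤ C := by
    simpa using hmax
  refine hgz.trans ?_
  have hexp : A * (enorm' z + r * enorm' v)
      ≤ A * ((2 * (d:ℝ) + 1) * enorm' v) + A * enorm' z := by
    nlinarith [mul_le_mul_of_nonneg_left (mul_le_mul_of_nonneg_right hr2 hev) hA.le]
  calc C ≤ M * Real.exp (A * ((2 * (d:ℝ) + 1) * enorm' v) + A * enorm' z) / ‖c₀‖ := by
        rw [hC]
        exact (div_le_div_iff_of_pos_right hc0pos).mpr
          (mul_le_mul_of_nonneg_left (Real.exp_le_exp.mpr hexp) hM)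
      _ = M * Real.exp (A * ((2 * (d:ℝ) + 1) * enorm' v)) / ‖c₀‖ *
          Real.exp (A * enorm' z) := by
        rw [Real.exp_add]; ring
end

section
/- Let p be a non-zero polynomial on ℂ in one variable, A > 0, and (F_m) a sequence of entire functions with ‖pF_m - G‖_A → 0 for some entire G with ‖G‖_A < ∞. Then there exists an entire function F with G = p·F. -/
lemma aux_divide (n : ℕ) : ∀ (p : Polynomial ℂ), p.natDegree = n → p ≠ 0 →
    ∀ (A : ℝ), 0 < A → ∀ (F : ℕ → ℂ → ℂ), (∀ m, Differentiable ℂ (F m)) →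
    ∀ (G : ℂ → ℂ), Differentiable ℂ G →
    (∀ ε > (0:ℝ), ∃ N, ∀ m ≥ N, ∀ z,
      ‖p.eval z * F m z - G z‖ ≤ ε * Real.exp (A * ‖z‖)) →
    ∃ Flim : ℂ → ℂ, Differentiable ℂ Flim ∧ ∀ z, G z = p.eval z * Flim z := by
  induction n with
  | zero =>
    intro p hdeg hp A hA F hF G hG hconv
    obtain ⟨c, rfl⟩ := Polynomial.natDegree_eq_zero.mp hdeg
    have hc : c ≠ 0 := by simpa using hp
    refine ⟨fun z => G z / c, hG.div_const c, fun z => ?_⟩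
    simp [Polynomial.eval_C]
    field_simp
  | succ n ih =>
    intro p hdeg hp A hA F hF G hG hconv
    -- find a root of p
    obtain ⟨a, ha⟩ := Complex.exists_root (f := p) (by
      rw [Polynomial.degree_eq_natDegree hp, hdeg]; exact_mod_cast Nat.succ_pos n)
    obtain ⟨q, hq⟩ := (Polynomial.dvd_iff_isRoot.mpr ha)
    have hXa : (Polynomial.X - Polynomial.C a) ≠ 0 := Polynomial.X_sub_C_ne_zero a
    have hqne : q ≠ 0 := by rintro rfl; simp [hq] at hp
    have hqdeg : q.natDegree = n := by
      have := Polynomial.natDegree_mul hXa hqne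
      rw [← hq, hdeg, Polynomial.natDegree_X_sub_C] at this
      omega
    have heval : ∀ z, p.eval z = (z - a) * q.eval z := by
      intro z; rw [hq]; simp
    -- G a = 0
    have hGa : G a = 0 := by
      have h1 : ∀ ε > (0:ℝ), ‖G a‖ ≤ ε * Real.exp (A * ‖a‖) := by
        intro ε hε
        obtain ⟨N, hN⟩ := hconv ε hε
        have := hN N le_rfl a
        have hpa : p.eval a = 0 := ha
        simpa [hpa] using this
      by_contra hne
      have habs : 0 < ‖G a‖ := by
        simpa [norm_pos_iff] using hne
      set c := Real.exp (A * ‖a‖) with hc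
      have hcpos : 0 < c := Real.exp_pos _
      have := h1 (‖G a‖ / (2 * c)) (by positivity)
      rw [div_mul_eq_mul_div, mul_comm] at this
      have : ‖G a‖ ≤ ‖G a‖ / 2 := by
        calc ‖G a‖ ≤ c * ‖G a‖ / (2 * c) := this
        _ = ‖G a‖ / 2 := by field_simp
      linarith
    -- G₁ = G / (z - a), entire via removable singularity
    set G₁ : ℂ → ℂ := dslope G a with hG₁def
    have hG₁diff : Differentiable ℂ G₁ := by
      have : DifferentiableOn ℂ G₁ Set.univ := by
        rw [hG₁def, Complex.differentiableOn_dslope (by simp)]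
        exact hG.differentiableOn
      exact (differentiableOn_univ.mp this)
    have hG₁eq : ∀ z, G z = (z - a) * G₁ z := by
      intro z
      have := sub_smul_dslope G a z
      rw [hGa, sub_zero, smul_eq_mul] at this
      rw [← this, hG₁def]
    -- convergence hypothesis for q, G₁
    have hconv' : ∀ ε > (0:ℝ), ∃ N, ∀ m ≥ N, ∀ z,
        ‖q.eval z * F m z - G₁ z‖ ≤ ε * Real.exp (A * ‖z‖) := by
      intro ε hε
      set ε' := ε / Real.exp (2 * A) with hε'def
      have hε' : 0 < ε' := by positivity
      obtain ⟨N, hN⟩ := hconv ε' hε'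
      refine ⟨N, fun m hm z => ?_⟩
      set H : ℂ → ℂ := fun w => q.eval w * F m w - G₁ w with hHdef
      have hHdiff : Differentiable ℂ H :=
        ((q.differentiable_aeval.mul (hF m))).sub hG₁diff
      have hkey : ∀ w, (w - a) * H w = p.eval w * F m w - G w := by
        intro w
        rw [hHdef]
        simp only
        rw [mul_sub, ← mul_assoc, ← heval, ← hG₁eq]
      have hH1 : ∀ w, ‖w - a‖ * ‖H w‖
          ≤ ε' * Real.exp (A * ‖w‖) := by
        intro w
        rw [← norm_mul, hkey w]
        exact hN m hm w
      have hεle : ε' ≤ ε := by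
        rw [hε'def]
        have : (1:ℝ) ≤ Real.exp (2 * A) := Real.one_le_exp (by positivity)
        calc ε / Real.exp (2*A) ≤ ε / 1 := by
              apply div_le_div_of_nonneg_left hε.le one_pos this
        _ = ε := div_one ε
      by_cases hcase : 1 ≤ ‖z - a‖
      · have h1 := hH1 z
        have h2 : ‖H z‖ ≤ ‖z - a‖ * ‖H z‖ :=
          le_mul_of_one_le_left (by positivity) hcase
        calc ‖H z‖ ≤ ε' * Real.exp (A * ‖z‖) := le_trans h2 h1
        _ ≤ ε * Real.exp (A * ‖z‖) := by
            apply mul_le_mul_of_nonneg_right hεle (Real.exp_pos _).le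
      · -- |z - a| < 1 : maximum modulus on ball a 1
        push_neg at hcase
        have hzball : z ∈ Metric.closedBall a 1 := by
          rw [Metric.mem_closedBall, dist_eq_norm]
          exact le_of_lt (by simpa using hcase)
        have hmax : ‖H z‖ ≤ ε' * Real.exp (A * (‖a‖ + 1)) := by
          have := Complex.norm_le_of_forall_mem_frontier_norm_le
            (U := Metric.ball a 1) Metric.isBounded_ball
            hHdiff.diffContOnCl (C := ε' * Real.exp (A * (‖a‖ + 1)))
            (fun w hw => ?_) (by rwa [closure_ball a one_ne_zero])
          · exact this
          · rw [frontier_ball a one_ne_zero] at hw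
            have hwa : ‖w - a‖ = 1 := by
              simpa [Complex.dist_eq] using hw
            have h1 := hH1 w
            rw [hwa, one_mul] at h1
            have hwle : ‖w‖ ≤ ‖a‖ + 1 := by
              calc ‖w‖ = ‖a + (w - a)‖ := by ring_nf
              _ ≤ ‖a‖ + ‖w - a‖ := norm_add_le _ _
              _ = ‖a‖ + 1 := by rw [hwa]
            calc ‖H w‖ = ‖H w‖ := rfl
            _ ≤ ε' * Real.exp (A * ‖w‖) := h1
            _ ≤ ε' * Real.exp (A * (‖a‖ + 1)) := by
                apply mul_le_mul_of_nonneg_left _ hε'.le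
                exact Real.exp_le_exp.mpr (mul_le_mul_of_nonneg_left hwle hA.le)
        have hzlb : ‖a‖ - 1 ≤ ‖z‖ := by
          have : ‖a‖ ≤ ‖z‖ + ‖a - z‖ := by
            calc ‖a‖ = ‖z + (a - z)‖ := by ring_nf
            _ ≤ _ := norm_add_le _ _
          have h2 : ‖a - z‖ ≤ 1 := by
            rw [← norm_neg]; simp only [neg_sub]; linarith
          linarith
        calc ‖H z‖ ≤ ε' * Real.exp (A * (‖a‖ + 1)) := hmax
        _ ≤ ε * Real.exp (A * ‖z‖) := by
            rw [hε'def, div_mul_eq_mul_div, div_le_iff₀ (Real.exp_pos _), mul_assoc,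
              ← Real.exp_add]
            apply mul_le_mul_of_nonneg_left _ hε.le
            apply Real.exp_le_exp.mpr
            nlinarith
    obtain ⟨Flim, hFd, hFe⟩ := ih q hqdeg hqne A hA F hF G₁ hG₁diff hconv'
    refine ⟨Flim, hFd, fun z => ?_⟩
    rw [hG₁eq z, hFe z, heval z, mul_assoc]

theorem stmt_14 (p : Polynomial ℂ) (hp : p ≠ 0) (A : ℝ) (hA : 0 < A)
    (F : ℕ → ℂ → ℂ) (hF : ∀ m, Differentiable ℂ (F m))
    (G : ℂ → ℂ) (hG : Differentiable ℂ G) (C : ℝ)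
    (hGb : ∀ z, ‖G z‖ ≤ C * Real.exp (A * ‖z‖))
    (hconv : ∀ ε > (0:ℝ), ∃ N, ∀ m ≥ N, ∀ z,
      ‖p.eval z * F m z - G z‖ ≤ ε * Real.exp (A * ‖z‖)) :
    ∃ Flim : ℂ → ℂ, Differentiable ℂ Flim ∧ ∀ z, G z = p.eval z * Flim z :=
  aux_divide p.natDegree p rfl hp A hA F hF G hG hconv
end
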